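/- Let (G₁,c₁) and (G₂,c₂) be circularly-ordered groups and let c be the circular ordering on the free product G₁ * G₂ determined by the minimal-reduction construction. If φᵢ : (Gᵢ,cᵢ) → (Hᵢ,dᵢ) are injective order-preserving homomorphisms of circularly-ordered groups for i = 1,2, then the induced homomorphism φ₁ * φ₂ : G₁ * G₂ → H₁ * H₂ is order-preserving with respect to c and the analogous circular ordering d on H₁ * H₂. -/

import Mathlib

open scoped Classical

noncomputable section

/-- A (left-invariant) circular ordering on a group `G`, as an orientation cocycle. -/
def IsCircularOrdering {G : Type*} [Group G] (c : G → G → G → ℤ) : Prop :=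
  (∀ a b d : G, c a b d = 0 ↔ a = b ∨ b = d ∨ a = d) ∧
  (∀ a b d : G, c a b d = 1 ∨ c a b d = 0 ∨ c a b d = -1) ∧
  (∀ a₁ a₂ a₃ a₄ : G, c a₂ a₃ a₄ - c a₁ a₃ a₄ + c a₁ a₂ a₄ - c a₁ a₂ a₃ = 0) ∧
  (∀ g a₁ a₂ a₃ : G, c (g * a₁) (g * a₂) (g * a₃) = c a₁ a₂ a₃)

/-- The normalized 2-cocycle `f_c` associated to a circular ordering `c`:
`f_c a b = 0` if `a = 1` or `b = 1` or `c 1 a (a*b) = 1`, and `1` otherwise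
(i.e. when `a*b = 1` with `a ≠ 1`, or `c 1 (a*b) a = 1`). -/
def fc {G : Type*} [Group G] (c : G → G → G → ℤ) (a b : G) : ℤ :=
  if a = 1 ∨ b = 1 ∨ c 1 a (a * b) = 1 then 0 else 1

open Monoid

/-- The first (leftmost) letter of the reduced word representing an element of the
free product. -/
def firstLetter {ι : Type*} [DecidableEq ι] {M : ι → Type*} [∀ i, Group (M i)]
    [∀ i, DecidableEq (M i)] (w : CoprodI M) : Option (Σ i, M i) :=
  (CoprodI.Word.equiv w).toList.head?

/-- `cf` is the circular ordering on the free product `G false * G true` determined by the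
minimal-reduction construction from the circular orderings `c i` of the factors:
it is a circular ordering, invariant under cyclic permutations, takes the prescribed values
on triples of letters, and is computed by reducing each word to its leftmost letter. -/
def IsFreeProdOrdering {M : Bool → Type*} [∀ i, Group (M i)] [∀ i, DecidableEq (M i)]
    (c : ∀ i, M i → M i → M i → ℤ)
    (cf : CoprodI M → CoprodI M → CoprodI M → ℤ) : Prop :=
  IsCircularOrdering cf ∧
  (∀ w₁ w₂ w₃ : CoprodI M, cf w₁ w₂ w₃ = cf w₂ w₃ w₁) ∧
  (∀ (g : M false) (h : M true), g ≠ 1 → h ≠ 1 →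
    cf (CoprodI.of g) (CoprodI.of h) 1 = 1 ∧ cf (CoprodI.of h) (CoprodI.of g) 1 = -1) ∧
  (∀ (i : Bool) (g₁ g₂ g₃ : M i),
    cf (CoprodI.of g₁) (CoprodI.of g₂) (CoprodI.of g₃) = c i g₁ g₂ g₃) ∧
  (∀ (g₁ g₂ : M false) (h : M true), g₁ ≠ 1 → g₂ ≠ 1 → h ≠ 1 →
    cf (CoprodI.of g₁) (CoprodI.of g₂) (CoprodI.of h) = c false g₁ g₂ 1) ∧
  (∀ (g : M false) (h₁ h₂ : M true), g ≠ 1 → h₁ ≠ 1 → h₂ ≠ 1 →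
    cf (CoprodI.of g) (CoprodI.of h₁) (CoprodI.of h₂) = c true 1 h₁ h₂) ∧
  (∀ (w₁ w₂ w₃ : CoprodI M) (i : Bool) (x : M i),
    firstLetter w₁ = some ⟨i, x⟩ → firstLetter w₂ ≠ some ⟨i, x⟩ →
    firstLetter w₃ ≠ some ⟨i, x⟩ → cf w₁ w₂ w₃ = cf (CoprodI.of x) w₂ w₃)


section Aux

open Monoid Monoid.CoprodI

set_option linter.unusedSectionVars false

variable {ι : Type*} [DecidableEq ι] {M : ι → Type*} [∀ i, Group (M i)] [∀ i, DecidableEq (M i)]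

theorem aux_len_rcons_le {i : ι} (p : Word.Pair M i) :
    (Word.rcons p).toList.length ≤ p.tail.toList.length + 1 := by
  rw [Word.rcons]; split <;> simp [Word.cons]

theorem aux_len_tail_le {i : ι} (w : Word M) :
    (Word.equivPair i w).tail.toList.length ≤ w.toList.length := by
  conv_rhs => rw [show w = Word.rcons (Word.equivPair i w) from
    ((Word.equivPair i).symm_apply_apply w).symm]
  rw [Word.rcons]; split <;> simp [Word.cons]

theorem aux_len_smul_le {i : ι} (m : M i) (w : Word M) :
    (CoprodI.of m • w).toList.length ≤ w.toList.length + 1 := by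
  rw [Word.of_smul_def]
  exact (aux_len_rcons_le _).trans (by simpa using aux_len_tail_le (i := i) w)

theorem aux_len_smul_head {i : ι} (x : M i) (w : Word M)
    (h : w.toList.head? = some ⟨i, x⟩) :
    ((CoprodI.of x)⁻¹ • w).toList.length + 1 = w.toList.length := by
  induction w using Word.consRecOn with
  | empty => simp at h
  | cons j m u h1 h2 _ =>
    simp only [Word.cons, List.head?_cons, Option.some.injEq] at h
    obtain ⟨rfl, h⟩ := Sigma.mk.inj_iff.mp h.symm
    obtain rfl := eq_of_heq h
    rw [Word.cons_eq_smul, ← mul_smul, inv_mul_cancel, one_smul]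
    rw [← Word.cons_eq_smul (h1 := h1) (h2 := h2)]
    simp [Word.cons]

/-- The length of the reduced word of an element of the free product. -/
def len (w : CoprodI M) : ℕ := (Word.equiv w).toList.length

theorem aux_equiv_mul (a x : CoprodI M) : Word.equiv (a * x) = a • Word.equiv x := by
  change (a * x) • (Word.empty : Word M) = a • (x • (Word.empty : Word M))
  exact mul_smul a x Word.empty

theorem aux_equiv_one : Word.equiv (1 : CoprodI M) = Word.empty := by
  change (1 : CoprodI M) • (Word.empty : Word M) = Word.empty
  exact one_smul _ _

theorem aux_equiv_prod (v : Word M) : Word.equiv (Word.prod v) = v :=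
  Word.equiv.apply_symm_apply v

theorem aux_prod_equiv (w : CoprodI M) : Word.prod (Word.equiv w) = w :=
  Word.equiv.symm_apply_apply w

theorem aux_len_mul_le {i : ι} (m : M i) (w : CoprodI M) :
    len (CoprodI.of m * w) ≤ len w + 1 := by
  rw [len, len, aux_equiv_mul]; exact aux_len_smul_le m _

theorem aux_len_inv_mul {i : ι} {x : M i} {w : CoprodI M} (h : firstLetter w = some ⟨i, x⟩) :
    len ((CoprodI.of x)⁻¹ * w) + 1 = len w := by
  rw [len, len, aux_equiv_mul]; exact aux_len_smul_head x _ h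

theorem aux_firstLetter_eq_none {w : CoprodI M} : firstLetter w = none ↔ w = 1 := by
  rw [firstLetter, List.head?_eq_none_iff]
  constructor
  · intro h
    have h2 : Word.equiv w = Word.empty := Word.ext h
    calc w = Word.prod (Word.equiv w) := (aux_prod_equiv w).symm
    _ = 1 := by rw [h2, Word.prod_empty]
  · rintro rfl; rw [aux_equiv_one]; rfl

theorem aux_firstLetter_ne_one {w : CoprodI M} {l : Σ i, M i} (h : firstLetter w = some l) :
    l.2 ≠ 1 :=
  (Word.equiv w).ne_one l (List.mem_of_mem_head? h)

theorem aux_equiv_of {i : ι} (x : M i) (hx : x ≠ 1) :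
    Word.equiv (CoprodI.of x) = ⟨[⟨i, x⟩], by simpa using hx, List.isChain_singleton _⟩ := by
  have h : Word.prod ⟨[⟨i, x⟩], by simpa using hx, List.isChain_singleton _⟩ = CoprodI.of x := by
    simp [Word.prod]
  rw [← h, aux_equiv_prod]

theorem aux_firstLetter_of {i : ι} (x : M i) (hx : x ≠ 1) :
    firstLetter (CoprodI.of x) = some ⟨i, x⟩ := by
  rw [firstLetter, aux_equiv_of x hx]; rfl

section Map
variable {N : ι → Type*} [∀ i, Group (N i)] [∀ i, DecidableEq (N i)]
variable (φ : ∀ i, M i →* N i) (hφ : ∀ i, Function.Injective (φ i))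
include hφ

/-- Mapping a reduced word letterwise along injective homomorphisms. -/
def mapWord (w : Word M) : Word N where
  toList := w.toList.map fun l => ⟨l.1, φ l.1 l.2⟩
  ne_one := by
    intro l hl
    simp only [List.mem_map] at hl
    obtain ⟨a, ha, rfl⟩ := hl
    intro h
    exact w.ne_one a ha (hφ a.1 (by simpa using h))
  chain_ne := by
    rw [List.isChain_map]
    exact w.chain_ne

theorem aux_prod_mapWord (w : Word M) :
    Word.prod (mapWord φ hφ w) =
      CoprodI.lift (fun i => CoprodI.of.comp (φ i)) (Word.prod w) := by
  rw [Word.prod, Word.prod, mapWord, map_list_prod, List.map_map, List.map_map]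
  congr 1

theorem aux_equiv_lift (w : CoprodI M) :
    Word.equiv (CoprodI.lift (fun i => CoprodI.of.comp (φ i)) w) =
      mapWord φ hφ (Word.equiv w) := by
  conv_lhs => rw [← aux_prod_equiv w]
  rw [← aux_prod_mapWord, aux_equiv_prod]

theorem aux_firstLetter_lift (w : CoprodI M) :
    firstLetter (CoprodI.lift (fun i => CoprodI.of.comp (φ i)) w) =
      Option.map (fun l => (⟨l.1, φ l.1 l.2⟩ : Σ i, N i)) (firstLetter w) := by
  rw [firstLetter, firstLetter, aux_equiv_lift φ hφ, mapWord]
  simp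

end Map

end Aux

/-- If `φᵢ : (Gᵢ,cᵢ) → (Hᵢ,dᵢ)` are injective order-preserving homomorphisms, then the induced
homomorphism `φ₁ * φ₂` of free products is order-preserving for the circular orderings given
by the minimal-reduction construction. -/
theorem stmt18 {M N : Bool → Type*} [∀ i, Group (M i)] [∀ i, Group (N i)]
    [∀ i, DecidableEq (M i)] [∀ i, DecidableEq (N i)]
    (c : ∀ i, M i → M i → M i → ℤ) (d : ∀ i, N i → N i → N i → ℤ)
    (hc : ∀ i, IsCircularOrdering (c i)) (hd : ∀ i, IsCircularOrdering (d i))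
    (cf : CoprodI M → CoprodI M → CoprodI M → ℤ)
    (df : CoprodI N → CoprodI N → CoprodI N → ℤ)
    (hcf : IsFreeProdOrdering c cf) (hdf : IsFreeProdOrdering d df)
    (φ : ∀ i, M i →* N i) (hφinj : ∀ i, Function.Injective (φ i))
    (hφord : ∀ (i : Bool) (g₁ g₂ g₃ : M i),
      c i g₁ g₂ g₃ = d i (φ i g₁) (φ i g₂) (φ i g₃)) :
    ∀ w₁ w₂ w₃ : CoprodI M,
      cf w₁ w₂ w₃ =
        df (CoprodI.lift (fun i => CoprodI.of.comp (φ i)) w₁)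
          (CoprodI.lift (fun i => CoprodI.of.comp (φ i)) w₂)
          (CoprodI.lift (fun i => CoprodI.of.comp (φ i)) w₃) := by
  classical
  obtain ⟨⟨cfzero, -, -, cfinv⟩, cfrot, cf3, cf4, cf5, cf6, cf7⟩ := hcf
  obtain ⟨⟨dfzero, -, -, dfinv⟩, dfrot, df3, df4, df5, df6, df7⟩ := hdf
  set Φ := CoprodI.lift (fun i => CoprodI.of.comp (φ i)) with hΦdef
  have Φof : ∀ (i : Bool) (x : M i), Φ (CoprodI.of x) = CoprodI.of (φ i x) := by
    intro i x; simp [hΦdef]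
  have hφne : ∀ (i : Bool) (x : M i), x ≠ 1 → φ i x ≠ 1 := by
    intro i x hx h
    exact hx (hφinj i (by simpa using h))
  have hFinj : ∀ a b : Σ i, M i,
      (⟨a.1, φ a.1 a.2⟩ : Σ i, N i) = ⟨b.1, φ b.1 b.2⟩ → a = b := by
    rintro ⟨i, x⟩ ⟨j, y⟩ h
    obtain ⟨rfl, h2⟩ := Sigma.mk.inj_iff.mp h
    exact Sigma.mk.inj_iff.mpr ⟨rfl, heq_of_eq (hφinj i (eq_of_heq h2))⟩
  -- same-index triples of letters
  have hsame : ∀ (i : Bool) (x y z : M i),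
      cf (CoprodI.of x) (CoprodI.of y) (CoprodI.of z) =
        df (CoprodI.of (φ i x)) (CoprodI.of (φ i y)) (CoprodI.of (φ i z)) := by
    intro i x y z
    rw [cf4, df4]
    exact hφord i x y z
  have hmix1 : ∀ (g : M false) (h : M true), g ≠ 1 → h ≠ 1 →
      cf (CoprodI.of g) (CoprodI.of h) 1 =
        df (CoprodI.of (φ false g)) (CoprodI.of (φ true h)) 1 := by
    intro g h hg hh
    rw [(cf3 g h hg hh).1, (df3 (φ false g) (φ true h) (hφne _ _ hg) (hφne _ _ hh)).1]
  have hmix2 : ∀ (g : M false) (h : M true), g ≠ 1 → h ≠ 1 →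
      cf (CoprodI.of h) (CoprodI.of g) 1 =
        df (CoprodI.of (φ true h)) (CoprodI.of (φ false g)) 1 := by
    intro g h hg hh
    rw [(cf3 g h hg hh).2, (df3 (φ false g) (φ true h) (hφne _ _ hg) (hφne _ _ hh)).2]
  -- mixed-index triples of letters: two `false`, one `true`
  have hFFT : ∀ (x y : M false) (z : M true),
      cf (CoprodI.of x) (CoprodI.of y) (CoprodI.of z) =
        df (CoprodI.of (φ false x)) (CoprodI.of (φ false y)) (CoprodI.of (φ true z)) := by
    intro x y z
    by_cases hz : z = 1
    · subst hz
      have e1 : CoprodI.of (1 : M true) = CoprodI.of (1 : M false) := by simp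
      have e2 : CoprodI.of (φ true (1 : M true)) = CoprodI.of (φ false (1 : M false)) := by
        simp
      rw [e1, e2]
      exact hsame false x y 1
    by_cases hx : x = 1
    · by_cases hy : y = 1
      · rw [(cfzero _ _ _).mpr (Or.inl (by rw [hx, hy])),
          (dfzero _ _ _).mpr (Or.inl (by rw [hx, hy]))]
      · subst hx
        simp only [map_one]
        rw [cfrot, dfrot]
        exact hmix1 y z hy hz
    by_cases hy : y = 1
    · subst hy
      simp only [map_one]
      rw [cfrot, cfrot, dfrot, dfrot]
      exact hmix2 x z hx hz
    · rw [cf5 x y z hx hy hz, df5 (φ false x) (φ false y) (φ true z)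
        (hφne _ _ hx) (hφne _ _ hy) (hφne _ _ hz)]
      have := hφord false x y 1
      rwa [map_one] at this
  -- mixed-index triples of letters: one `false`, two `true`
  have hFTT : ∀ (x : M false) (y z : M true),
      cf (CoprodI.of x) (CoprodI.of y) (CoprodI.of z) =
        df (CoprodI.of (φ false x)) (CoprodI.of (φ true y)) (CoprodI.of (φ true z)) := by
    intro x y z
    by_cases hx : x = 1
    · subst hx
      have e1 : CoprodI.of (1 : M false) = CoprodI.of (1 : M true) := by simp
      have e2 : CoprodI.of (φ false (1 : M false)) = CoprodI.of (φ true (1 : M true)) := by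
        simp
      rw [e1, e2]
      exact hsame true 1 y z
    by_cases hy : y = 1
    · by_cases hz : z = 1
      · rw [(cfzero _ _ _).mpr (Or.inr (Or.inl (by rw [hy, hz]))),
          (dfzero _ _ _).mpr (Or.inr (Or.inl (by rw [hy, hz])))]
      · subst hy
        simp only [map_one]
        rw [cfrot, cfrot, dfrot, dfrot]
        exact hmix2 x z hx hz
    by_cases hz : z = 1
    · subst hz
      simp only [map_one]
      exact hmix1 x y hx hy
    · rw [cf6 x y z hx hy hz, df6 (φ false x) (φ true y) (φ true z)
        (hφne _ _ hx) (hφne _ _ hy) (hφne _ _ hz)]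
      have := hφord true 1 y z
      rwa [map_one] at this
  -- all triples of letters
  have key : ∀ a b e : Σ i, M i,
      cf (CoprodI.of a.2) (CoprodI.of b.2) (CoprodI.of e.2) =
        df (CoprodI.of (φ a.1 a.2)) (CoprodI.of (φ b.1 b.2)) (CoprodI.of (φ e.1 e.2)) := by
    rintro ⟨i, x⟩ ⟨j, y⟩ ⟨k, z⟩
    dsimp only
    cases i <;> cases j <;> cases k
    · exact hsame false x y z
    · exact hFFT x y z
    · rw [cfrot, cfrot, dfrot, dfrot]; exact hFFT z x y
    · exact hFTT x y z
    · rw [cfrot, dfrot]; exact hFFT y z x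
    · rw [cfrot, dfrot]; exact hFTT y z x
    · rw [cfrot, cfrot, dfrot, dfrot]; exact hFTT z x y
    · exact hsame true x y z
  -- main induction on total length
  suffices H : ∀ (n : ℕ) (w₁ w₂ w₃ : CoprodI M), len w₁ + len w₂ + len w₃ ≤ n →
      cf w₁ w₂ w₃ = df (Φ w₁) (Φ w₂) (Φ w₃) by
    intro w₁ w₂ w₃
    exact H _ w₁ w₂ w₃ le_rfl
  have hlen0 : ∀ w : CoprodI M, len w = 0 → w = 1 := by
    intro w h
    exact aux_firstLetter_eq_none.mp
      (List.head?_eq_none_iff.mpr (List.length_eq_zero_iff.mp h))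
  intro n
  induction n with
  | zero =>
    intro w₁ w₂ w₃ hl
    have e1 : w₁ = 1 := hlen0 _ (by omega)
    have e2 : w₂ = 1 := hlen0 _ (by omega)
    rw [(cfzero _ _ _).mpr (Or.inl (by rw [e1, e2])),
      (dfzero _ _ _).mpr (Or.inl (by rw [e1, e2]))]
  | succ n ih =>
    have caseA : ∀ (u₁ u₂ u₃ : CoprodI M) (i : Bool) (x : M i),
        firstLetter u₁ = some ⟨i, x⟩ → firstLetter u₂ = some ⟨i, x⟩ →
        len u₁ + len u₂ + len u₃ ≤ n + 1 → cf u₁ u₂ u₃ = df (Φ u₁) (Φ u₂) (Φ u₃) := by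
      intro u₁ u₂ u₃ i x h1 h2 hl
      have hcfstep := cfinv (CoprodI.of x) ((CoprodI.of x)⁻¹ * u₁) ((CoprodI.of x)⁻¹ * u₂) ((CoprodI.of x)⁻¹ * u₃)
      rw [mul_inv_cancel_left, mul_inv_cancel_left, mul_inv_cancel_left] at hcfstep
      have hdfstep := dfinv (Φ (CoprodI.of x)) ((Φ (CoprodI.of x))⁻¹ * Φ u₁) ((Φ (CoprodI.of x))⁻¹ * Φ u₂) ((Φ (CoprodI.of x))⁻¹ * Φ u₃)
      rw [mul_inv_cancel_left, mul_inv_cancel_left, mul_inv_cancel_left] at hdfstep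
      have hlen1 := aux_len_inv_mul h1
      have hlen2 := aux_len_inv_mul h2
      have hlen3 : len ((CoprodI.of x)⁻¹ * u₃) ≤ len u₃ + 1 := by
        rw [← map_inv]
        exact aux_len_mul_le x⁻¹ u₃
      have hih := ih ((CoprodI.of x)⁻¹ * u₁) ((CoprodI.of x)⁻¹ * u₂) ((CoprodI.of x)⁻¹ * u₃) (by omega)
      have hΦmul : ∀ u : CoprodI M, Φ ((CoprodI.of x)⁻¹ * u) = (Φ (CoprodI.of x))⁻¹ * Φ u := by
        intro u; rw [map_mul, map_inv]
      rw [hcfstep, hih, hΦmul, hΦmul, hΦmul, ← hdfstep]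
    intro w₁ w₂ w₃ hl
    by_cases h12 : firstLetter w₁ = firstLetter w₂
    · rcases hf1 : firstLetter w₁ with - | ⟨i, x⟩
      · have e1 : w₁ = 1 := aux_firstLetter_eq_none.mp hf1
        have e2 : w₂ = 1 := aux_firstLetter_eq_none.mp (h12.symm.trans hf1)
        rw [(cfzero _ _ _).mpr (Or.inl (by rw [e1, e2])),
          (dfzero _ _ _).mpr (Or.inl (by rw [e1, e2]))]
      · exact caseA w₁ w₂ w₃ i x hf1 (h12.symm.trans hf1) hl
    by_cases h23 : firstLetter w₂ = firstLetter w₃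
    · rcases hf2 : firstLetter w₂ with - | ⟨i, x⟩
      · have e1 : w₂ = 1 := aux_firstLetter_eq_none.mp hf2
        have e2 : w₃ = 1 := aux_firstLetter_eq_none.mp (h23.symm.trans hf2)
        rw [(cfzero _ _ _).mpr (Or.inr (Or.inl (by rw [e1, e2]))),
          (dfzero _ _ _).mpr (Or.inr (Or.inl (by rw [e1, e2])))]
      · rw [cfrot, dfrot]
        exact caseA w₂ w₃ w₁ i x hf2 (h23.symm.trans hf2) (by omega)
    by_cases h13 : firstLetter w₁ = firstLetter w₃
    · rcases hf1 : firstLetter w₁ with - | ⟨i, x⟩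
      · have e1 : w₁ = 1 := aux_firstLetter_eq_none.mp hf1
        have e2 : w₃ = 1 := aux_firstLetter_eq_none.mp (h13.symm.trans hf1)
        rw [(cfzero _ _ _).mpr (Or.inr (Or.inr (by rw [e1, e2]))),
          (dfzero _ _ _).mpr (Or.inr (Or.inr (by rw [e1, e2])))]
      · rw [cfrot, cfrot, dfrot, dfrot]
        exact caseA w₃ w₁ w₂ i x (h13.symm.trans hf1) hf1 (by omega)
    · -- all first letters distinct: reduce each word to its first letter
      have reduceStep : ∀ (u₁ u₂ u₃ : CoprodI M),
          firstLetter u₂ ≠ firstLetter u₁ → firstLetter u₃ ≠ firstLetter u₁ →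
          ∃ l : Σ i, M i,
            Φ (CoprodI.of l.2) = CoprodI.of (φ l.1 l.2) ∧
            firstLetter (CoprodI.of l.2) = firstLetter u₁ ∧
            cf u₁ u₂ u₃ = cf (CoprodI.of l.2) u₂ u₃ ∧
            df (Φ u₁) (Φ u₂) (Φ u₃) = df (Φ (CoprodI.of l.2)) (Φ u₂) (Φ u₃) := by
        intro u₁ u₂ u₃ hne2 hne1
        rcases hf1 : firstLetter u₁ with - | ⟨i, x⟩
        · refine ⟨⟨false, 1⟩, Φof false 1, ?_, ?_, ?_⟩
          · show firstLetter (CoprodI.of (1 : M false)) = none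
            rw [map_one]
            exact aux_firstLetter_eq_none.mpr rfl
          · show cf u₁ u₂ u₃ = cf (CoprodI.of (1 : M false)) u₂ u₃
            rw [map_one, aux_firstLetter_eq_none.mp hf1]
          · show df (Φ u₁) (Φ u₂) (Φ u₃) = df (Φ (CoprodI.of (1 : M false))) (Φ u₂) (Φ u₃)
            rw [map_one, aux_firstLetter_eq_none.mp hf1]
        · have hx1 : x ≠ 1 := aux_firstLetter_ne_one hf1
          refine ⟨⟨i, x⟩, Φof i x, ?_, ?_, ?_⟩
          · rw [aux_firstLetter_of x hx1]
          · exact cf7 u₁ u₂ u₃ i x hf1 (fun h => hne2 (h.trans hf1.symm))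
              (fun h => hne1 (h.trans hf1.symm))
          · have hfΦ1 : firstLetter (Φ u₁) = some ⟨i, φ i x⟩ := by
              rw [hΦdef, aux_firstLetter_lift φ hφinj, hf1]; rfl
            have hfΦ : ∀ (u : CoprodI M), firstLetter u ≠ firstLetter u₁ →
                firstLetter (Φ u) ≠ some ⟨i, φ i x⟩ := by
              intro u hu hcontra
              rw [hΦdef, aux_firstLetter_lift φ hφinj] at hcontra
              rcases hfu : firstLetter u with - | l
              · rw [hfu] at hcontra; simp at hcontra
              · rw [hfu] at hcontra
                simp only [Option.map_some, Option.some.injEq] at hcontra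
                have : l = ⟨i, x⟩ := hFinj l ⟨i, x⟩ hcontra
                exact hu (by rw [hfu, this, hf1])
            have := df7 (Φ u₁) (Φ u₂) (Φ u₃) i (φ i x) hfΦ1
              (hfΦ u₂ hne2) (hfΦ u₃ hne1)
            rw [this, Φof i x]
      obtain ⟨l₁, hP1, hfl1, hcf1, hdf1⟩ := reduceStep w₁ w₂ w₃
        (Ne.symm h12) (Ne.symm h13)
      rw [hcf1, hdf1, cfrot, dfrot]
      obtain ⟨l₂, hP2, hfl2, hcf2, hdf2⟩ := reduceStep w₂ w₃ (CoprodI.of l₁.2)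
        (Ne.symm h23) (by rw [hfl1]; exact h12)
      rw [hcf2, hdf2, cfrot, dfrot]
      obtain ⟨l₃, hP3, hfl3, hcf3, hdf3⟩ := reduceStep w₃ (CoprodI.of l₁.2) (CoprodI.of l₂.2)
        (by rw [hfl1]; exact h13) (by rw [hfl2]; exact h23)
      rw [hcf3, hdf3, cfrot, dfrot, hP1, hP2, hP3]
      exact key l₁ l₂ l₃
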